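/- Let p be a prime and ℤ_p the ring of p-adic integers. Let (A_j)_{j∈J} be a family of commutative ℤ_p-algebras such that for every j ∈ J: A_j is a nontrivial ring, p is a nonzerodivisor on A_j (i.e. A_j is p-torsion-free), and p is not a unit in A_j. Then the product ring ∏_{j∈J} A_j is faithfully flat as a module over ∏_{j∈J} ℤ_p, via the product of the structure homomorphisms. -/

import Mathlib

private lemma padic_pow_mul_eq_zero {p : ℕ} {B : Type*} [CommRing B]
    (htf : ∀ x : B, (p : B) * x = 0 → x = 0) :
    ∀ (n : ℕ) (x : B), (p : B) ^ n * x = 0 → x = 0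
  | 0, x, h => by simpa using h
  | n + 1, x, h =>
    htf x (padic_pow_mul_eq_zero htf n ((p : B) * x) (by rw [← h]; ring))

private lemma padic_regular {p : ℕ} [Fact p.Prime] {B : Type*} [CommRing B] [Algebra ℤ_[p] B]
    (htf : ∀ x : B, (p : B) * x = 0 → x = 0) {x : ℤ_[p]} (hx : x ≠ 0)
    (m : B) (h : x • m = 0) : m = 0 := by
  rw [Algebra.smul_def] at h
  rw [PadicInt.unitCoeff_spec hx, map_mul, map_pow, map_natCast, mul_assoc] at h
  have hu : IsUnit (algebraMap ℤ_[p] B ((PadicInt.unitCoeff hx : ℤ_[p]ˣ) : ℤ_[p])) :=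
    (PadicInt.unitCoeff hx).isUnit.map (algebraMap ℤ_[p] B)
  have h2 : (p : B) ^ x.valuation * m = 0 := hu.mul_right_eq_zero.mp h
  exact padic_pow_mul_eq_zero htf _ m h2

private lemma padic_isUnit_of_map {p : ℕ} [Fact p.Prime] {B : Type*} [CommRing B] [Nontrivial B]
    [Algebra ℤ_[p] B] (hnu : ¬IsUnit (p : B)) {x : ℤ_[p]}
    (h : IsUnit (algebraMap ℤ_[p] B x)) : IsUnit x := by
  by_cases hx : x = 0
  · rw [hx, map_zero] at h
    exact absurd h not_isUnit_zero
  · rw [PadicInt.unitCoeff_spec hx, map_mul, map_pow, map_natCast] at h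
    have hpn : IsUnit ((p : B) ^ x.valuation) := isUnit_of_mul_isUnit_right h
    have hn : x.valuation = 0 := by
      by_contra hn
      exact hnu (isUnit_of_dvd_unit (dvd_pow_self (p : B) hn) hpn)
    rw [PadicInt.unitCoeff_spec hx, hn, pow_zero, mul_one]
    exact (PadicInt.unitCoeff hx).isUnit

private lemma padic_span_pair_principal {p : ℕ} [Fact p.Prime] {J : Type*}
    (a b : ∀ _ : J, ℤ_[p]) :
    ∃ c : ∀ _ : J, ℤ_[p], Ideal.span {a, b} = Ideal.span {c} := by
  classical
  refine ⟨fun j => if a j ∣ b j then a j else b j, le_antisymm ?_ ?_⟩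
  · rw [Ideal.span_le, Set.insert_subset_iff, Set.singleton_subset_iff]
    have hca : ∀ j, (if a j ∣ b j then a j else b j) ∣ a j := fun j => by
      by_cases h : a j ∣ b j
      · simp [h]
      · simpa [h] using (ValuationRing.dvd_total (a j) (b j)).resolve_left h
    have hcb : ∀ j, (if a j ∣ b j then a j else b j) ∣ b j := fun j => by
      by_cases h : a j ∣ b j
      · simpa [h] using h
      · simp [h]
    constructor
    · exact Ideal.mem_span_singleton.mpr
        ⟨fun j => (hca j).choose, funext fun j => (hca j).choose_spec⟩
    · exact Ideal.mem_span_singleton.mpr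
        ⟨fun j => (hcb j).choose, funext fun j => (hcb j).choose_spec⟩
  · rw [Ideal.span_le, Set.singleton_subset_iff]
    refine Ideal.mem_span_pair.mpr
      ⟨fun j => if a j ∣ b j then 1 else 0, fun j => if a j ∣ b j then 0 else 1,
        funext fun j => ?_⟩
    by_cases h : a j ∣ b j <;> simp [h]

private lemma padic_fg_principal {p : ℕ} [Fact p.Prime] {J : Type*}
    (I : Ideal (∀ _ : J, ℤ_[p])) (hI : I.FG) : ∃ c, I = Ideal.span {c} := by
  classical
  obtain ⟨s, rfl⟩ := hI
  induction s using Finset.induction_on with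
  | empty => exact ⟨0, by rw [Finset.coe_empty, Ideal.span_empty,
      (Ideal.span_singleton_eq_bot).mpr rfl]⟩
  | @insert a s ha ih =>
    obtain ⟨c, hc⟩ := ih
    obtain ⟨d, hd⟩ := padic_span_pair_principal a c
    refine ⟨d, ?_⟩
    rw [Finset.coe_insert, Ideal.span_insert, hc, ← Ideal.span_insert, hd]

/-- Let `(A j)` be a family of commutative `ℤ_p`-algebras which are nontrivial,
`p`-torsion-free, and in which `p` is not a unit.  Then `∏ A j` is faithfully flat over
`∏ ℤ_p` via the product of the structure homomorphisms. -/
theorem product_faithfullyFlat_over_product_padicInt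
    (p : ℕ) [Fact p.Prime] {J : Type*} (A : J → Type*)
    [∀ j, CommRing (A j)] [∀ j, Algebra ℤ_[p] (A j)]
    [∀ j, Nontrivial (A j)]
    (htf : ∀ j, ∀ x : A j, (p : A j) * x = 0 → x = 0)
    (hnu : ∀ j, ¬IsUnit (p : A j)) :
    @Module.FaithfullyFlat (∀ _ : J, ℤ_[p]) (∀ j, A j) _ _
      (Module.compHom _
        (Pi.ringHom fun j =>
          (algebraMap ℤ_[p] (A j)).comp (Pi.evalRingHom (fun _ : J => ℤ_[p]) j))) := by
  classical
  have hMod : (Module.compHom (∀ j, A j)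
      (Pi.ringHom fun j =>
        (algebraMap ℤ_[p] (A j)).comp (Pi.evalRingHom (fun _ : J => ℤ_[p]) j)) :
      Module (∀ _ : J, ℤ_[p]) (∀ j, A j)) = Pi.module' := by
    refine Module.ext' _ _ fun r x => funext fun j => ?_
    show algebraMap ℤ_[p] (A j) (r j) * x j = r j • x j
    exact (Algebra.smul_def _ _).symm
  rw [hMod]
  refine { toFlat := ?_, submodule_ne_top := ?_ }
  · -- flatness
    refine Module.Flat.iff_lift_lsmul_comp_subtype_injective.mpr fun I hI => ?_
    obtain ⟨e, rfl⟩ := padic_fg_principal I hI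
    rw [injective_iff_map_eq_zero]
    have he : e ∈ Ideal.span {e} := Ideal.mem_span_singleton_self e
    have hsur : ∀ t : TensorProduct (∀ _ : J, ℤ_[p])
        ↥(Ideal.span {e} : Ideal (∀ _ : J, ℤ_[p])) (∀ j, A j),
        ∃ m : ∀ j, A j, (⟨e, he⟩ : Ideal.span {e}) ⊗ₜ[∀ _ : J, ℤ_[p]] m = t := by
      intro t
      induction t using TensorProduct.induction_on with
      | zero => exact ⟨0, TensorProduct.tmul_zero _ _⟩
      | tmul x n =>
        obtain ⟨r, hr⟩ := Ideal.mem_span_singleton'.mp x.2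
        refine ⟨r • n, ?_⟩
        rw [← TensorProduct.smul_tmul]
        congr 1
        exact Subtype.ext (by rw [SetLike.val_smul, smul_eq_mul, hr])
      | add u v hu hv =>
        obtain ⟨m1, h1⟩ := hu
        obtain ⟨m2, h2⟩ := hv
        exact ⟨m1 + m2, by rw [TensorProduct.tmul_add, h1, h2]⟩
    intro t ht
    obtain ⟨m, rfl⟩ := hsur t
    have ht' : e • m = 0 := by
      rw [TensorProduct.lift.tmul] at ht
      exact ht
    have hm : ∀ j, e j ≠ 0 → m j = 0 := fun j hj =>
      padic_regular (htf j) hj (m j) (congrFun ht' j)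
    set ε : ∀ _ : J, ℤ_[p] := fun j => if e j = 0 then 1 else 0 with hε
    have h1 : ε • m = m := funext fun j => by
      show (if e j = 0 then (1 : ℤ_[p]) else 0) • m j = m j
      by_cases h : e j = 0
      · rw [if_pos h, one_smul]
      · rw [if_neg h, hm j h, smul_zero]
    have h2 : ε • (⟨e, he⟩ : Ideal.span {e}) = 0 := by
      refine Subtype.ext (funext fun j => ?_)
      show (if e j = 0 then (1 : ℤ_[p]) else 0) * e j = 0
      by_cases h : e j = 0 <;> simp [h]
    rw [← h1, ← TensorProduct.smul_tmul, h2, TensorProduct.zero_tmul]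
  · -- faithfulness
    intro mI hmI htop
    have h1 : (1 : ∀ j, A j) ∈ mI • (⊤ : Submodule (∀ _ : J, ℤ_[p]) (∀ j, A j)) := by
      rw [htop]; trivial
    have key : ∀ x : (∀ j, A j), x ∈ mI • (⊤ : Submodule (∀ _ : J, ℤ_[p]) (∀ j, A j)) →
        ∃ b ∈ mI, ∀ j, ∃ y : A j, x j = b j • y := by
      intro x hx
      refine Submodule.smul_induction_on hx ?_ ?_
      · intro r hr n _
        exact ⟨r, hr, fun j => ⟨n j, rfl⟩⟩
      · rintro x y ⟨b, hb, hbx⟩ ⟨c, hc, hcy⟩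
        obtain ⟨d, hdm, hdb, hdc⟩ :
            ∃ d : ∀ _ : J, ℤ_[p], d ∈ mI ∧ (∀ j, d j ∣ b j) ∧ (∀ j, d j ∣ c j) := by
          refine ⟨fun j => if b j ∣ c j then b j else c j, ?_, fun j => ?_, fun j => ?_⟩
          · have hrepr : (fun j => if b j ∣ c j then b j else c j) =
                (fun j => if b j ∣ c j then (1 : ℤ_[p]) else 0) * b +
                (fun j => if b j ∣ c j then (0 : ℤ_[p]) else 1) * c := funext fun j => by
              show (if b j ∣ c j then b j else c j) =
                (if b j ∣ c j then (1 : ℤ_[p]) else 0) * b j +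
                (if b j ∣ c j then (0 : ℤ_[p]) else 1) * c j
              by_cases h : b j ∣ c j <;> simp [h]
            rw [hrepr]
            exact mI.add_mem (mI.mul_mem_left _ hb) (mI.mul_mem_left _ hc)
          · show (if b j ∣ c j then b j else c j) ∣ b j
            by_cases h : b j ∣ c j
            · simp [h]
            · simpa [h] using (ValuationRing.dvd_total (b j) (c j)).resolve_left h
          · show (if b j ∣ c j then b j else c j) ∣ c j
            by_cases h : b j ∣ c j
            · simpa [h] using h
            · simp [h]
        refine ⟨d, hdm, fun j => ?_⟩
        obtain ⟨ya, hy'⟩ := hbx j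
        obtain ⟨za, hz'⟩ := hcy j
        obtain ⟨s, hs⟩ := hdb j
        obtain ⟨t, ht2⟩ := hdc j
        refine ⟨s • ya + t • za, ?_⟩
        show x j + y j = d j • (s • ya + t • za)
        rw [hy', hz', hs, ht2, smul_add, mul_smul, mul_smul]
    obtain ⟨b, hb, h1b⟩ := key 1 h1
    have hu : ∀ j, IsUnit (b j) := fun j => by
      obtain ⟨y, hy⟩ := h1b j
      refine padic_isUnit_of_map (hnu j) (IsUnit.of_mul_eq_one y ?_)
      rw [← Algebra.smul_def]
      exact hy.symm
    have hbu : IsUnit b := by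
      choose inv hinv using fun j => (hu j).exists_right_inv
      exact IsUnit.of_mul_eq_one (a := b) (fun j => inv j) (funext fun j => hinv j)
    exact hmI.ne_top (mI.eq_top_of_isUnit_mem hb hbu)
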